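/- Fix ξ^{(1)}, ξ^{(2)} ∈ {−1,0,1}^{([n] choose 2)}. Then the Minkowski sum L_{ξ^{(1)}} + L_{ξ^{(2)}} equals L_ξ, where ξ_{ij} = ξ^{(1)}_{ij} if ξ^{(1)}_{ij} = ξ^{(2)}_{ij} and ξ_{ij} = 0 otherwise; i.e., the sum is cut out by exactly the inequalities common to both summands. -/
import Mathlib


/-!
Statement 0: A function f : {0,1}^n → ℝ (identified with a function on subsets of [n])
is π-supermodular iff for all i ≠ j the signed elementary imset inequalities
τ_i τ_j A^{(ij)} f ≥ 0 hold.

We encode a tuple π of linear orders on {0,1} by its sign vector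
τ : Fin n → Bool, where `true` means the standard order 0 < 1 (sign +1)
and `false` means the reversed order 1 < 0 (sign −1).
-/

/-- Componentwise meet of two subsets (as indicator vectors) w.r.t. the
product order with sign vector `τ`. -/
def piMeet {n : ℕ} (τ : Fin n → Bool) (S T : Finset (Fin n)) : Finset (Fin n) :=
  Finset.univ.filter fun i => if τ i then i ∈ S ∧ i ∈ T else i ∈ S ∨ i ∈ T

/-- Componentwise join of two subsets (as indicator vectors) w.r.t. the
product order with sign vector `τ`. -/
def piJoin {n : ℕ} (τ : Fin n → Bool) (S T : Finset (Fin n)) : Finset (Fin n) :=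
  Finset.univ.filter fun i => if τ i then i ∈ S ∨ i ∈ T else i ∈ S ∧ i ∈ T

/-- `f` is supermodular w.r.t. the product order with sign vector `τ`. -/
def IsPiSupermodular {n : ℕ} (τ : Fin n → Bool) (f : Finset (Fin n) → ℝ) : Prop :=
  ∀ S T : Finset (Fin n), f S + f T ≤ f (piMeet τ S T) + f (piJoin τ S T)

/-- The sign τ_i ∈ {±1} of the i-th linear order, as a real number. -/
noncomputable def signR {n : ℕ} (τ : Fin n → Bool) (i : Fin n) : ℝ :=
  if τ i then 1 else -1

/-- The elementary imset expression: the row of `A^{(ij)} f` corresponding to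
`z ⊆ [n] ∖ {i,j}`, namely `f(z) + f(z ∪ {i,j}) − f(z ∪ {i}) − f(z ∪ {j})`. -/
def imsetExpr {n : ℕ} (f : Finset (Fin n) → ℝ) (i j : Fin n) (z : Finset (Fin n)) : ℝ :=
  f z + f (insert i (insert j z)) - f (insert i z) - f (insert j z)

open Pointwise

/-- The cone L_ξ: all f with ξ_{ij}·A^{(ij)} f ≥ 0 for all i ≠ j (the condition
is vacuous when ξ_{ij} = 0, since then the inequality 0 ≤ 0 always holds). -/
def Lxi {n : ℕ} (ξ : Fin n → Fin n → ℤ) : Set (Finset (Fin n) → ℝ) :=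
  {f | ∀ i j : Fin n, i ≠ j → ∀ w : Finset (Fin n), i ∉ w → j ∉ w →
    0 ≤ (ξ i j : ℝ) * imsetExpr f i j w}

/-!
Statement 13: the Minkowski sum L_{ξ¹} + L_{ξ²} equals L_ξ, where
ξ_{ij} = ξ¹_{ij} if ξ¹_{ij} = ξ²_{ij} and ξ_{ij} = 0 otherwise.
-/
lemma quad_imset {n : ℕ} (c : Fin n → Fin n → ℝ) {i j : Fin n} (hij : i ≠ j)
    {z : Finset (Fin n)} (hi : i ∉ z) (hj : j ∉ z) :
    imsetExpr (fun S => ∑ a ∈ S, ∑ b ∈ S, c a b) i j z = c i j + c j i := by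
  have h1 : i ∉ insert j z := by simp [hij, hi]
  simp only [imsetExpr, Finset.sum_insert h1, Finset.sum_insert hi, Finset.sum_insert hj,
    Finset.sum_add_distrib]
  ring

lemma imset_add {n : ℕ} (f g : Finset (Fin n) → ℝ) (i j : Fin n) (z : Finset (Fin n)) :
    imsetExpr (f + g) i j z = imsetExpr f i j z + imsetExpr g i j z := by
  simp only [imsetExpr, Pi.add_apply]; ring

theorem statement13 (n : ℕ) (ξ₁ ξ₂ : Fin n → Fin n → ℤ)
    (hsym₁ : ∀ i j, ξ₁ i j = ξ₁ j i) (hsym₂ : ∀ i j, ξ₂ i j = ξ₂ j i)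
    (hval₁ : ∀ i j, ξ₁ i j = -1 ∨ ξ₁ i j = 0 ∨ ξ₁ i j = 1)
    (hval₂ : ∀ i j, ξ₂ i j = -1 ∨ ξ₂ i j = 0 ∨ ξ₂ i j = 1) :
    Lxi ξ₁ + Lxi ξ₂ = Lxi (fun i j => if ξ₁ i j = ξ₂ i j then ξ₁ i j else 0) := by
  ext f
  constructor
  · rintro ⟨f₁, h₁, f₂, h₂, rfl⟩
    intro i j hij w hi hj
    have a1 := h₁ i j hij w hi hj
    have a2 := h₂ i j hij w hi hj
    show 0 ≤ ((if ξ₁ i j = ξ₂ i j then ξ₁ i j else 0 : ℤ) : ℝ) * imsetExpr (f₁ + f₂) i j w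
    by_cases h : ξ₁ i j = ξ₂ i j
    · rw [h] at a1
      rw [if_pos h, h, imset_add, mul_add]
      linarith
    · rw [if_neg h]
      simp [imset_add]
  · intro hf
    -- big constant M bounding all |imsetExpr f i j z|
    set M : ℝ := ∑ i : Fin n, ∑ j : Fin n, ∑ z : Finset (Fin n), |imsetExpr f i j z| with hMdef
    have hM : ∀ i j : Fin n, ∀ w : Finset (Fin n), |imsetExpr f i j w| ≤ M := by
      intro i j w
      have h1 : |imsetExpr f i j w| ≤ ∑ z : Finset (Fin n), |imsetExpr f i j z| :=
        Finset.single_le_sum (f := fun z => |imsetExpr f i j z|) (fun z _ => abs_nonneg _) (Finset.mem_univ w)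
      have h2 : (∑ z : Finset (Fin n), |imsetExpr f i j z|)
          ≤ ∑ j' : Fin n, ∑ z : Finset (Fin n), |imsetExpr f i j' z| :=
        Finset.single_le_sum (f := fun j' => ∑ z : Finset (Fin n), |imsetExpr f i j' z|)
          (fun j' _ => Finset.sum_nonneg fun z _ => abs_nonneg _) (Finset.mem_univ j)
      have h3 : (∑ j' : Fin n, ∑ z : Finset (Fin n), |imsetExpr f i j' z|) ≤ M :=
        Finset.single_le_sum
          (f := fun i' => ∑ j' : Fin n, ∑ z : Finset (Fin n), |imsetExpr f i' j' z|)
          (fun i' _ => Finset.sum_nonneg fun j' _ => Finset.sum_nonneg fun z _ => abs_nonneg _)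
          (Finset.mem_univ i)
      linarith
    have hM0 : 0 ≤ M :=
      Finset.sum_nonneg fun i _ => Finset.sum_nonneg fun j _ =>
        Finset.sum_nonneg fun z _ => abs_nonneg _
    set c : Fin n → Fin n → ℝ := fun a b => ((ξ₁ a b - ξ₂ a b : ℤ) : ℝ) * M / 2 with hcdef
    set g : Finset (Fin n) → ℝ := fun S => ∑ a ∈ S, ∑ b ∈ S, c a b with hgdef
    have hgval : ∀ i j : Fin n, i ≠ j → ∀ z : Finset (Fin n), i ∉ z → j ∉ z →
        imsetExpr g i j z = ((ξ₁ i j - ξ₂ i j : ℤ) : ℝ) * M := by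
      intro i j hij z hi hj
      rw [hgdef, quad_imset c hij hi hj, hcdef]
      simp only
      rw [← hsym₁ i j, ← hsym₂ i j]
      ring
    refine ⟨f + g, ?_, -g, ?_, by ring⟩
    · intro i j hij w hi hj
      rw [imset_add, hgval i j hij w hi hj]
      have hE := hM i j w
      rw [abs_le] at hE
      rcases hval₁ i j with h1 | h1 | h1 <;> rcases hval₂ i j with h2 | h2 | h2 <;>
        (have := hf i j hij w hi hj; simp only [h1, h2] at this ⊢; push_cast at this ⊢; nlinarith)
    · intro i j hij w hi hj
      have : imsetExpr (-g) i j w = -imsetExpr g i j w := by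
        simp only [imsetExpr, Pi.neg_apply]; ring
      rw [this, hgval i j hij w hi hj]
      rcases hval₁ i j with h1 | h1 | h1 <;> rcases hval₂ i j with h2 | h2 | h2 <;>
        (simp only [h1, h2]; push_cast; nlinarith)
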